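/- arXiv:1312.2302 — 2 statements merged into one kernel-verified Lean document; each statement's English description precedes it below -/
import Mathlib

section
/- Let f : [0,∞) → ℝ be continuous, nonincreasing and strictly positive, such that g(x) = x·f(x) is nonincreasing on [x₀,∞) for some x₀ ≥ 0 and g(x) → 0 as x → ∞; let ρ : [0,∞) → ℝ be continuous with 0 < ρ(x) ≤ 1 for all x. For a > 0 define F_a(x) = x·f(x)/√(2π) − a·ρ(x)·f(x). Then F_a attains its maximum over [0,∞): there exists m ∈ [0,∞) with F_a(m) = sup_{x≥0} F_a(x); moreover F_a(m) > 0 and every such maximizer m is strictly positive. -/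
open Set

/-- In the market-making model, with a continuous, nonincreasing, strictly
positive fill-rate function `f` on `[0,∞)` such that `g(x) = x·f(x)` is nonincreasing on
`[x₀, ∞)` and tends to `0` at `∞`, and a continuous toxicity function `ρ` with
`0 < ρ(x) ≤ 1`, the function `F_a(x) = x·f(x)/√(2π) - a·ρ(x)·f(x)` attains its maximum
over `[0,∞)` for every `a > 0`; moreover the maximum value is strictly positive and every
maximizer is strictly positive. -/
theorem market_maker_hamiltonian_max
    (f ρ : ℝ → ℝ)
    (hfc : ContinuousOn f (Ici 0)) (hfanti : AntitoneOn f (Ici 0))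
    (hfpos : ∀ x, 0 ≤ x → 0 < f x)
    (x₀ : ℝ) (hx₀ : 0 ≤ x₀) (hganti : AntitoneOn (fun x => x * f x) (Ici x₀))
    (hglim : Filter.Tendsto (fun x => x * f x) Filter.atTop (nhds 0))
    (hρc : ContinuousOn ρ (Ici 0))
    (hρpos : ∀ x, 0 ≤ x → 0 < ρ x) (hρle : ∀ x, 0 ≤ x → ρ x ≤ 1)
    (a : ℝ) (ha : 0 < a)
    (Fa : ℝ → ℝ)
    (hFa : ∀ x, Fa x = x * f x / Real.sqrt (2 * Real.pi) - a * ρ x * f x) :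
    ∃ m, 0 ≤ m ∧ (∀ x, 0 ≤ x → Fa x ≤ Fa m) ∧ 0 < Fa m ∧
      ∀ m', 0 ≤ m' → (∀ x, 0 ≤ x → Fa x ≤ Fa m') → 0 < m' := by
  set c : ℝ := Real.sqrt (2 * Real.pi) with hc
  have hcpos : 0 < c := Real.sqrt_pos.2 (by positivity)
  -- the witness point where Fa is positive
  set x₁ : ℝ := (a + 1) * c with hx₁def
  have hx₁nn : 0 ≤ x₁ := by positivity
  have hfx₁ : 0 < f x₁ := hfpos _ hx₁nn
  have hFx₁ : f x₁ ≤ Fa x₁ := by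
    rw [hFa]
    have h1 : x₁ * f x₁ / c = (a + 1) * f x₁ := by
      rw [hx₁def]; field_simp
    have h2 : a * ρ x₁ * f x₁ ≤ a * f x₁ := by
      have h := hρle x₁ hx₁nn
      nlinarith [mul_nonneg (mul_nonneg ha.le (sub_nonneg.2 h)) hfx₁.le]
    rw [h1]; nlinarith
  have hFx₁pos : 0 < Fa x₁ := lt_of_lt_of_le hfx₁ hFx₁
  -- choose R beyond which x * f x < f x₁ * c
  have hev : ∀ᶠ x in Filter.atTop, x * f x < f x₁ * c :=
    hglim.eventually (gt_mem_nhds (by positivity))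
  obtain ⟨R, hR⟩ := Filter.eventually_atTop.1 hev
  set R₂ : ℝ := max R x₁ with hR₂
  have hx₁R₂ : x₁ ≤ R₂ := le_max_right _ _
  have hR₂nn : 0 ≤ R₂ := le_trans hx₁nn hx₁R₂
  -- continuity of Fa on [0, R₂]
  have hFaeq : Set.EqOn Fa (fun x => x * f x / c - a * ρ x * f x) (Icc 0 R₂) := by
    intro x _; rw [hFa]
  have hFac : ContinuousOn Fa (Icc 0 R₂) := by
    apply ContinuousOn.congr _ hFaeq
    have hsub : Icc (0:ℝ) R₂ ⊆ Ici 0 := Icc_subset_Ici_self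
    exact (((continuousOn_id.mul (hfc.mono hsub)).div_const c).sub
      ((continuousOn_const.mul (hρc.mono hsub)).mul (hfc.mono hsub)))
  obtain ⟨m, hm, hmax⟩ := (isCompact_Icc (a := (0:ℝ)) (b := R₂)).exists_isMaxOn
    (nonempty_Icc.2 hR₂nn) hFac
  have hmnn : 0 ≤ m := hm.1
  have hx₁mem : x₁ ∈ Icc (0:ℝ) R₂ := ⟨hx₁nn, hx₁R₂⟩
  have hFam : Fa x₁ ≤ Fa m := hmax hx₁mem
  have hglobal : ∀ x, 0 ≤ x → Fa x ≤ Fa m := by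
    intro x hx
    by_cases hxR : x ≤ R₂
    · exact hmax ⟨hx, hxR⟩
    · push_neg at hxR
      have hxR' : R ≤ x := le_trans (le_max_left _ _) hxR.le
      have hsmall : x * f x < f x₁ * c := hR x hxR'
      have hFax : Fa x ≤ x * f x / c := by
        rw [hFa]
        have : 0 ≤ a * ρ x * f x := by
          have := hρpos x hx; have := hfpos x hx; positivity
        linarith
      have : x * f x / c < f x₁ := (div_lt_iff₀ hcpos).2 hsmall
      linarith
  have hFampos : 0 < Fa m := lt_of_lt_of_le hFx₁pos hFam
  have hFa0 : Fa 0 < 0 := by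
    rw [hFa]
    have h1 := hρpos 0 le_rfl; have h2 := hfpos 0 le_rfl
    simp only [zero_mul, zero_div]
    nlinarith [mul_pos (mul_pos ha h1) h2]
  refine ⟨m, hmnn, hglobal, hFampos, ?_⟩
  intro m' hm' hmax'
  rcases lt_or_eq_of_le hm' with h | h
  · exact h
  · exfalso
    have : Fa x₁ ≤ Fa m' := hmax' x₁ hx₁nn
    rw [← h] at this
    linarith
end

section
/- Let f : [0,∞) → ℝ be continuous, nonincreasing and strictly positive, such that g(x) = x·f(x) is nonincreasing on [x₀,∞) for some x₀ ≥ 0 and g(x) → 0 as x → ∞; let ρ : [0,∞) → ℝ be continuous with 0 < ρ(x) ≤ 1 for all x. For a > 0 define F_a(x) = x·f(x)/√(2π) − a·ρ(x)·f(x) and M(a) = sup_{x ∈ [0,∞)} F_a(x). Then M is strictly decreasing on (0,∞): for all 0 < a < a', M(a') < M(a). -/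
open Set

/-- With `f`, `ρ` as in the market-making model (continuous, nonincreasing,
strictly positive fill rate `f` with `x·f(x)` eventually nonincreasing and tending to `0`,
and continuous toxicity `ρ` with `0 < ρ ≤ 1`), the optimized Hamiltonian
`M(a) = sup_{x ≥ 0} (x·f(x)/√(2π) - a·ρ(x)·f(x))` is strictly decreasing on `(0, ∞)`: for all `0 < a < a'`, `M(a') < M(a)`. -/
theorem market_maker_value_strict_anti
    (f ρ : ℝ → ℝ)
    (hfc : ContinuousOn f (Ici 0)) (hfanti : AntitoneOn f (Ici 0))
    (hfpos : ∀ x, 0 ≤ x → 0 < f x)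
    (x₀ : ℝ) (hx₀ : 0 ≤ x₀) (hganti : AntitoneOn (fun x => x * f x) (Ici x₀))
    (hglim : Filter.Tendsto (fun x => x * f x) Filter.atTop (nhds 0))
    (hρc : ContinuousOn ρ (Ici 0))
    (hρpos : ∀ x, 0 ≤ x → 0 < ρ x) (hρle : ∀ x, 0 ≤ x → ρ x ≤ 1)
    (M : ℝ → ℝ)
    (hM : ∀ a, M a
      = sSup ((fun x => x * f x / Real.sqrt (2 * Real.pi) - a * ρ x * f x) '' Ici 0)) :
    StrictAntiOn M (Ioi 0) := by
  set s := Real.sqrt (2 * Real.pi) with hsdef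
  have hs : 0 < s := Real.sqrt_pos.mpr (by positivity)
  set F : ℝ → ℝ → ℝ := fun a x => x * f x / s - a * ρ x * f x with hF
  -- continuity of F a on [0, ∞)
  have hFc : ∀ a : ℝ, ContinuousOn (F a) (Ici 0) := fun a =>
    ((continuousOn_id.mul hfc).div_const _).sub ((continuousOn_const.mul hρc).mul hfc)
  -- global bound on g(x) = x f x
  obtain ⟨z, hz, hzmax⟩ := (isCompact_Icc : IsCompact (Icc 0 x₀)).exists_isMaxOn
    ⟨0, le_refl 0, hx₀⟩ ((continuousOn_id.mul hfc).mono Icc_subset_Ici_self)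
  have hgbd : ∀ x, 0 ≤ x → x * f x ≤ z * f z := by
    intro x hx
    rcases le_total x x₀ with h | h
    · exact hzmax ⟨hx, h⟩
    · exact le_trans (hganti (mem_Ici.mpr le_rfl) h h) (hzmax ⟨hx₀, le_rfl⟩)
  have hρf : ∀ a x : ℝ, 0 < a → 0 ≤ x → 0 < a * ρ x * f x := by
    intro a x ha hx
    have h1 := hρpos x hx
    have h2 := hfpos x hx
    positivity
  have hFle : ∀ a x : ℝ, 0 < a → 0 ≤ x → F a x ≤ z * f z / s := by
    intro a x ha hx
    have h1 : F a x ≤ x * f x / s := by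
      have := hρf a x ha hx
      simp only [hF]
      linarith
    exact h1.trans ((div_le_div_iff_of_pos_right hs).mpr (hgbd x hx))
  have hbdd : ∀ a : ℝ, 0 < a → BddAbove (F a '' Ici 0) :=
    fun a ha => ⟨z * f z / s, by rintro y ⟨x, hx, rfl⟩; exact hFle a x ha hx⟩
  -- attainment of the supremum
  have hattain : ∀ a : ℝ, 0 < a → ∃ x, 0 ≤ x ∧ ∀ y, 0 ≤ y → F a y ≤ F a x := by
    intro a ha
    set x₁ : ℝ := a * s + 1 with hx1
    have hx1pos : 0 ≤ x₁ := by positivity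
    have hc : 0 < F a x₁ := by
      have hf1 := hfpos x₁ hx1pos
      have key : x₁ * f x₁ / s = a * f x₁ + f x₁ / s := by
        rw [hx1]; field_simp
      have h2 : a * ρ x₁ * f x₁ ≤ a * f x₁ :=
        mul_le_mul_of_nonneg_right (mul_le_of_le_one_right ha.le (hρle x₁ hx1pos)) hf1.le
      have h3 : 0 < f x₁ / s := by positivity
      simp only [hF]
      rw [key]
      linarith
    have hcs : 0 < F a x₁ * s := by positivity
    obtain ⟨X, hX⟩ := Filter.eventually_atTop.mp (hglim.eventually (eventually_lt_nhds hcs))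
    have hK0 : (0 : ℝ) ≤ max X x₁ := le_trans hx1pos (le_max_right _ _)
    obtain ⟨w, hw, hwmax⟩ := (isCompact_Icc : IsCompact (Icc 0 (max X x₁))).exists_isMaxOn
      ⟨0, le_rfl, hK0⟩ ((hFc a).mono Icc_subset_Ici_self)
    refine ⟨w, hw.1, ?_⟩
    intro y hy
    rcases le_total y (max X x₁) with h | h
    · exact hwmax ⟨hy, h⟩
    · have hyX : X ≤ y := le_trans (le_max_left _ _) h
      have h1 : y * f y < F a x₁ * s := hX y hyX
      have h2 : F a y ≤ y * f y / s := by
        have := hρf a y ha hy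
        simp only [hF]
        linarith
      have h3 : y * f y / s < F a x₁ := (div_lt_iff₀ hs).mpr h1
      have h4 : F a x₁ ≤ F a w := hwmax ⟨hx1pos, le_max_right _ _⟩
      exact ((h2.trans_lt h3).trans_le h4).le
  -- main argument
  intro a ha a' ha' hlt
  simp only [mem_Ioi] at ha ha'
  obtain ⟨w, hw, hwmax⟩ := hattain a' ha'
  have hMa' : M a' = F a' w := by
    rw [hM a']
    refine IsGreatest.csSup_eq ⟨⟨w, hw, rfl⟩, ?_⟩
    rintro y ⟨x, hx, rfl⟩
    exact hwmax x hx
  have hstep : F a' w < F a w := by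
    simp only [hF]
    have h1 : 0 < ρ w * f w := mul_pos (hρpos w hw) (hfpos w hw)
    nlinarith
  have hle : F a w ≤ M a := by
    rw [hM a]
    exact le_csSup (hbdd a ha) ⟨w, hw, rfl⟩
  rw [hMa']
  linarith
end
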